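/- The topologist's sine curve X = ({0} × [−1,1]) ∪ {(t, sin(1/t)) : t ∈ (0,1]} ⊆ ℝ² is an AANR. -/

import Mathlib

open Topology

universe u v

/-- A compactum `X` is an *approximative absolute neighborhood retract* (AANR). -/
def IsAANR (X : Type u) [TopologicalSpace X] : Prop :=
  ∀ (Y : Type v) [MetricSpace Y] [CompactSpace Y] (θ : X → Y),
    IsEmbedding θ →
    ∀ ε > (0 : ℝ), ∃ δ > (0 : ℝ), ∃ r : Y → X,
      ContinuousOn r {y | Metric.infDist y (Set.range θ) ≤ δ} ∧
      ∀ x : X, dist (θ (r (θ x))) (θ x) ≤ ε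

/-- The topologist's sine curve
`({0} × [−1,1]) ∪ {(t, sin(1/t)) : t ∈ (0,1]} ⊆ ℝ²`. -/
noncomputable def sineCurve : Set (ℝ × ℝ) :=
  {p : ℝ × ℝ | p.1 = 0 ∧ p.2 ∈ Set.Icc (-1 : ℝ) 1} ∪
    {p : ℝ × ℝ | ∃ t : ℝ, 0 < t ∧ t ≤ 1 ∧ p = (t, Real.sin (1 / t))}

lemma sineCurve_subset : sineCurve ⊆ Set.Icc (0:ℝ) 1 ×ˢ Set.Icc (-1:ℝ) 1 := by
  rintro p (⟨h1, h2⟩ | ⟨t, ht0, ht1, rfl⟩)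
  · exact ⟨⟨le_of_eq h1.symm, by rw [h1]; norm_num⟩, h2⟩
  · exact ⟨⟨ht0.le, ht1⟩, Real.neg_one_le_sin _, Real.sin_le_one _⟩

lemma sineCurve_isClosed : IsClosed sineCurve := by
  apply isClosed_of_closure_subset
  intro p hp
  have hbox : p ∈ Set.Icc (0:ℝ) 1 ×ˢ Set.Icc (-1:ℝ) 1 :=
    closure_minimal sineCurve_subset (isClosed_Icc.prod isClosed_Icc) hp
  rcases eq_or_lt_of_le hbox.1.1 with h0 | h0
  · exact Or.inl ⟨h0.symm, hbox.2⟩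
  · set u := p.1 / 2 with hu
    have hupos : 0 < u := by positivity
    have hsub : sineCurve ⊆ {x : ℝ × ℝ | x.1 ≤ u} ∪
        ((fun t : ℝ => (t, Real.sin (1/t))) '' Set.Icc u 1) := by
      rintro x (⟨hx1, _⟩ | ⟨t, ht0, ht1, rfl⟩)
      · exact Or.inl (by simp only [Set.mem_setOf_eq, hx1]; linarith)
      · rcases le_or_gt t u with h | h
        · exact Or.inl h
        · exact Or.inr ⟨t, ⟨h.le, ht1⟩, rfl⟩
    have hS2 : IsCompact ((fun t : ℝ => (t, Real.sin (1/t))) '' Set.Icc u 1) := by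
      apply isCompact_Icc.image_of_continuousOn
      apply ContinuousOn.prodMk continuousOn_id
      apply Real.continuous_sin.comp_continuousOn
      apply ContinuousOn.div continuousOn_const continuousOn_id
      intro t ht
      exact ne_of_gt (lt_of_lt_of_le hupos ht.1)
    have hcl := closure_minimal hsub
      ((isClosed_le continuous_fst continuous_const).union hS2.isClosed)
    rcases hcl hp with h | h
    · exfalso
      simp only [Set.mem_setOf_eq] at h
      linarith
    · obtain ⟨t, ht, rfl⟩ := h
      exact Or.inr ⟨t, lt_of_lt_of_le hupos ht.1, ht.2, rfl⟩

lemma sineCurve_isCompact : IsCompact sineCurve :=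
  (isCompact_Icc.prod isCompact_Icc).of_isClosed_subset sineCurve_isClosed sineCurve_subset

/-- The topologist's sine curve is an AANR. -/
theorem sineCurve_isAANR : IsAANR ↥sineCurve := by
  intro Y _ _ θ hθ ε εpos
  haveI : CompactSpace ↥sineCurve := isCompact_iff_compactSpace.mp sineCurve_isCompact
  obtain ⟨δ', δ'pos, hδ'⟩ := Metric.uniformContinuous_iff.mp
    (CompactSpace.uniformContinuous_of_continuous hθ.continuous) ε εpos
  obtain ⟨n, hn⟩ := exists_nat_ge (1/δ' + 4)
  set c : ℝ := (n : ℝ) * (2 * Real.pi) with hc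
  have hpi1 : (3:ℝ) < Real.pi := Real.pi_gt_three
  have hpi2 : Real.pi < 3.15 := Real.pi_lt_d2
  have hδ'inv : (0:ℝ) < 1/δ' := by positivity
  have hcn : (n : ℝ) ≤ c := by nlinarith [Nat.cast_nonneg (α := ℝ) n]
  have hc2 : 1/δ' + 2 ≤ c - Real.pi/2 := by linarith
  have hcpos : 0 < c - Real.pi/2 := by linarith
  -- abbreviations
  set t₀ : ℝ := (c - Real.pi/2)⁻¹ with ht₀
  set t₁ : ℝ := (c + 2)⁻¹ with ht₁def
  set ψ : ℝ → ℝ := fun y => (Real.arcsin y + c)⁻¹ with hψ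
  have hden : ∀ y, 0 < Real.arcsin y + c := by
    intro y
    have := Real.neg_pi_div_two_le_arcsin y
    linarith
  have hψpos : ∀ y, 0 < ψ y := fun y => inv_pos.mpr (hden y)
  have hψle : ∀ y, ψ y ≤ t₀ := by
    intro y
    have := Real.neg_pi_div_two_le_arcsin y
    exact inv_anti₀ hcpos (by linarith)
  have ht₁pos : 0 < t₁ := inv_pos.mpr (by linarith)
  have ht₁le : ∀ y, t₁ ≤ ψ y := by
    intro y
    have := Real.arcsin_le_pi_div_two y
    exact inv_anti₀ (hden y) (by linarith)
  have ht₀δ : t₀ < δ' := by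
    have h1 : 1/δ' < c - Real.pi/2 := by linarith
    have := inv_strictAnti₀ hδ'inv h1
    rwa [one_div, inv_inv] at this
  have ht₀1 : t₀ ≤ 1 := inv_le_one_of_one_le₀ (by linarith)
  have ht₀pos : 0 < t₀ := inv_pos.mpr hcpos
  have ht₁1 : t₁ ≤ 1 := inv_le_one_of_one_le₀ (by linarith)
  have hsinψ : ∀ y, -1 ≤ y → y ≤ 1 → Real.sin (ψ y)⁻¹ = y := by
    intro y h1 h2
    rw [hψ]
    simp only [inv_inv]
    rw [hc, Real.sin_add_nat_mul_two_pi, Real.sin_arcsin h1 h2]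
  -- the maps
  set φ : ℝ × ℝ → ℝ := fun p => max p.1 (ψ p.2) with hφ
  have hφcont : Continuous φ := by
    apply continuous_fst.max
    exact ((Real.continuous_arcsin.comp continuous_snd).add continuous_const).inv₀
      (fun p => (hden p.2).ne')
  set cl : ℝ → ℝ := fun s => max t₁ (min 1 s) with hcl
  have hclcont : Continuous cl := continuous_const.max (continuous_const.min continuous_id)
  have hclpos : ∀ s, 0 < cl s := fun s => lt_of_lt_of_le ht₁pos (le_max_left _ _)
  have hcl1 : ∀ s, cl s ≤ 1 := fun s => max_le ht₁1 (min_le_left _ _)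
  set g : ℝ → ℝ × ℝ := fun s => (cl s, Real.sin (cl s)⁻¹) with hg
  have hgmem : ∀ s, g s ∈ sineCurve := by
    intro s
    exact Or.inr ⟨cl s, hclpos s, hcl1 s, by rw [one_div]⟩
  have hgcont : Continuous g :=
    hclcont.prodMk (Real.continuous_sin.comp (hclcont.inv₀ fun s => (hclpos s).ne'))
  -- clamping is trivial on values of φ on the curve
  have hclφ : ∀ x : ↥sineCurve, cl (φ x.val) = φ x.val := by
    intro x
    have hbox := sineCurve_subset x.2
    have h1 : φ x.val ≤ 1 := max_le hbox.1.2 ((hψle _).trans ht₀1)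
    have h2 : t₁ ≤ φ x.val := (ht₁le _).trans (le_max_right _ _)
    rw [hcl]
    simp only
    rw [min_eq_right h1, max_eq_right h2]
  -- the key estimate
  have hkey : ∀ x : ↥sineCurve, dist (g (φ x.val)) x.val ≤ t₀ := by
    intro x
    obtain ⟨p, hp⟩ := x
    have hbox := sineCurve_subset hp
    simp only
    rw [Prod.dist_eq]
    have hs1 : p.1 ≤ φ p := le_max_left _ _
    have hs2 : φ p - p.1 ≤ ψ p.2 := by
      rcases max_cases p.1 (ψ p.2) with ⟨h, _⟩ | ⟨h, _⟩
      · rw [hφ]; simp only; rw [h]; simp [(hψpos p.2).le]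
      · rw [hφ]; simp only; rw [h]; linarith [hbox.1.1]
    have hcoord1 : dist (g (φ p)).1 p.1 ≤ t₀ := by
      rw [hg]
      simp only
      rw [hclφ ⟨p, hp⟩]
      rw [Real.dist_eq, abs_of_nonneg (by linarith)]
      linarith [hψle p.2]
    have hcoord2 : (g (φ p)).2 = p.2 := by
      rw [hg]
      simp only
      rw [hclφ ⟨p, hp⟩]
      rcases le_or_gt (ψ p.2) p.1 with h | h
      · -- φ p = p.1, and p is a curve point
        have hmax : φ p = p.1 := max_eq_left h
        have hppos : 0 < p.1 := lt_of_lt_of_le (hψpos p.2) h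
        rcases hp with ⟨h0, _⟩ | ⟨t, ht0, ht1, hpt⟩
        · exact absurd h0 hppos.ne'
        · rw [hmax, hpt]
          simp only
          rw [← one_div]
      · have hmax : φ p = ψ p.2 := max_eq_right h.le
        rw [hmax, hsinψ p.2 hbox.2.1 hbox.2.2]
    calc max (dist (g (φ p)).1 p.1) (dist (g (φ p)).2 p.2)
        ≤ max t₀ 0 := max_le_max hcoord1 (by rw [hcoord2]; simp)
      _ = t₀ := max_eq_left ht₀pos.le
  -- Tietze extension
  have hclosedrange : IsClosed (Set.range θ) := (isCompact_range hθ.continuous).isClosed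
  set h : ↥sineCurve ≃ₜ Set.range θ := hθ.toHomeomorph with hh
  obtain ⟨G, hG⟩ := (⟨fun y => φ (h.symm y).val,
    (hφcont.comp continuous_subtype_val).comp h.symm.continuous⟩ :
      C(Set.range θ, ℝ)).exists_restrict_eq hclosedrange
  have hGθ : ∀ x : ↥sineCurve, G (θ x) = φ x.val := by
    intro x
    have h1 := ContinuousMap.congr_fun hG ⟨θ x, Set.mem_range_self x⟩
    simp only [ContinuousMap.restrict_apply, ContinuousMap.coe_mk] at h1
    have h2 : h.symm ⟨θ x, Set.mem_range_self x⟩ = x := by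
      apply h.injective
      rw [Homeomorph.apply_symm_apply]
      rfl
    rw [h2] at h1
    exact h1
  -- assemble
  refine ⟨1, one_pos, fun y => ⟨g (G y), hgmem _⟩, ?_, ?_⟩
  · exact ((hgcont.comp G.continuous).subtype_mk _).continuousOn
  · intro x
    have hd : dist (⟨g (G (θ x)), hgmem _⟩ : ↥sineCurve) x < δ' := by
      rw [Subtype.dist_eq]
      simp only
      rw [hGθ x]
      exact lt_of_le_of_lt (hkey x) ht₀δ
    exact (hδ' hd).le
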